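/- In a bipartite graph G with a maximum matching M, classify each vertex as even/odd (reachable from some M-unmatched vertex by an alternating path of even/odd length) or unreachable. Then the sets E, O, U of even, odd, and unreachable vertices are pairwise disjoint. -/

import Mathlib

open SimpleGraph

/-- Edges of a list alternate w.r.t. membership in `S`; the flag records whether
the next edge must belong to `S`. -/
def altEdges {V : Type*} (S : Set (Sym2 V)) : Bool → List (Sym2 V) → Prop
  | _, [] => True
  | flag, e :: rest => (e ∈ S ↔ flag = true) ∧ altEdges S (!flag) rest

/-- `v` is reachable from some `M`-unmatched vertex by an alternating path
(starting with a non-matching edge) of even length. -/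
def EvenVtx {V : Type*} (G : SimpleGraph V) (M : G.Subgraph) (v : V) : Prop :=
  ∃ u, u ∉ M.verts ∧ ∃ p : G.Walk u v,
    p.IsPath ∧ altEdges M.edgeSet false p.edges ∧ Even p.length

/-- `v` is reachable from some `M`-unmatched vertex by an alternating path of
odd length. -/
def OddVtx {V : Type*} (G : SimpleGraph V) (M : G.Subgraph) (v : V) : Prop :=
  ∃ u, u ∉ M.verts ∧ ∃ p : G.Walk u v,
    p.IsPath ∧ altEdges M.edgeSet false p.edges ∧ Odd p.length

/-- `v` is not reachable from any `M`-unmatched vertex by an alternating path. -/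
def UnreachableVtx {V : Type*} (G : SimpleGraph V) (M : G.Subgraph) (v : V) : Prop :=
  ∀ u (p : G.Walk u v), u ∉ M.verts → p.IsPath →
    altEdges M.edgeSet false p.edges → False

def xf (n : ℕ) (f : Bool) : Bool := if n % 2 = 0 then f else !f

lemma xf_zero (f : Bool) : xf 0 f = f := rfl

lemma xf_succ (n : ℕ) (f : Bool) : xf (n+1) f = xf n (!f) := by
  by_cases h : n % 2 = 0
  · have h2 : (n+1) % 2 = 1 := by omega
    simp [xf, h, h2]
  · have h1 : n % 2 = 1 := by omega
    have h2 : (n+1) % 2 = 0 := by omega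
    simp [xf, h1, h2]

lemma xf_even {n : ℕ} (h : Even n) (f : Bool) : xf n f = f := by
  have : n % 2 = 0 := Nat.even_iff.mp h
  simp [xf, this]

lemma xf_add_even {n m : ℕ} (h : Even m) (f : Bool) : xf (n + m) f = xf n f := by
  rcases Nat.even_or_odd n with hn | hn
  · rw [xf_even (hn.add h) f, xf_even hn f]
  · have h1 : n % 2 = 1 := Nat.odd_iff.mp hn
    have h2 : (n + m) % 2 = 1 := by
      have := Nat.even_iff.mp h; omega
    simp [xf, h1, h2]

section

variable {V : Type*} {S T : Set (Sym2 V)}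

lemma altEdges_append : ∀ (l1 l2 : List (Sym2 V)) (f : Bool),
    altEdges S f (l1 ++ l2) ↔ altEdges S f l1 ∧ altEdges S (xf l1.length f) l2
  | [], l2, f => by simp [altEdges, xf_zero]
  | e :: l1, l2, f => by
    simp only [List.cons_append, altEdges, List.append_eq, altEdges_append l1 l2 (!f),
      List.length_cons, xf_succ, and_assoc]

lemma altEdges_reverse : ∀ (l : List (Sym2 V)) (f : Bool),
    altEdges S f l → altEdges S (xf (l.length + 1) f) l.reverse
  | [], f, _ => trivial
  | e :: l, f, h => by
    obtain ⟨he, hl⟩ := h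
    have ih := altEdges_reverse l (!f) hl
    rw [List.reverse_cons, altEdges_append]
    simp only [List.length_cons]
    refine ⟨?_, ?_, trivial⟩
    · have : xf (l.length + 1 + 1) f = xf (l.length + 1) (!f) := by
        rw [xf_succ]
      rw [this]; exact ih
    · rw [List.length_reverse]
      have : xf l.length (xf (l.length + 1 + 1) f) = f := by
        rcases Nat.even_or_odd l.length with hn | hn
        · rw [xf_even hn, xf_even (Nat.even_iff.mpr (by have := Nat.even_iff.mp hn; omega))]
        · have h1 := Nat.odd_iff.mp hn
          have h2 : (l.length + 1 + 1) % 2 = 1 := by omega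
          simp [xf, h1, h2]
      rw [this]; exact he

lemma altEdges_congr : ∀ (l : List (Sym2 V)) (f : Bool),
    (∀ e ∈ l, (e ∈ S ↔ e ∈ T)) → altEdges S f l → altEdges T f l
  | [], _, _, _ => trivial
  | e :: l, f, hc, ⟨he, hl⟩ =>
    ⟨((hc e (by simp)).symm).trans he,
      altEdges_congr l (!f) (fun e' he' => hc e' (by simp [he'])) hl⟩

end

section

variable {V : Type*} {G : SimpleGraph V} {side : V → Bool}

lemma walk_parity (hbip : ∀ u v, G.Adj u v → side u ≠ side v) :
    ∀ {x y : V} (w : G.Walk x y), Even w.length ↔ side x = side y := by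
  intro x y w
  induction w with
  | nil => simp
  | @cons x z y h p ih =>
    have hne := hbip _ _ h
    rw [Walk.length_cons, Nat.even_add_one, ih]
    cases hsx : side x <;> cases hsy : side y <;> cases hsz : side z <;> simp_all

end

section
variable {V : Type*} {G : SimpleGraph V}

lemma splice [DecidableEq V] : ∀ {x b : V} (d : G.Walk x b), x ∈ d.support.tail →
    ∃ (r : G.Walk x b) (c : G.Walk x x), 0 < c.length ∧
      d.edges = c.edges ++ r.edges ∧ d.length = c.length + r.length := by
  intro x b d hxd
  cases d with
  | nil => simp at hxd
  | @cons _ z _ hadj d2 =>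
    have hxd2 : x ∈ d2.support := by simpa using hxd
    refine ⟨d2.dropUntil x hxd2, Walk.cons hadj (d2.takeUntil x hxd2), by simp, ?_, ?_⟩
    · rw [Walk.edges_cons]
      conv_lhs => rw [← d2.take_spec hxd2]
      rw [Walk.edges_append, Walk.edges_cons, List.cons_append]
    · rw [Walk.length_cons]
      conv_lhs => rw [← d2.take_spec hxd2]
      rw [Walk.length_append, Walk.length_cons]
      omega

variable {side : V → Bool}

lemma extract_path (hbip : ∀ u v, G.Adj u v → side u ≠ side v) {S : Set (Sym2 V)} :
    ∀ (n : ℕ) {a b : V} (w : G.Walk a b), w.length = n →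
      altEdges S false w.edges →
      ∃ p : G.Walk a b, p.IsPath ∧ altEdges S false p.edges ∧
        p.length % 2 = w.length % 2 := by
  classical
  intro n
  induction n using Nat.strong_induction_on with
  | _ n ih =>
  intro a b w hlen halt
  by_cases hnd : w.support.Nodup
  · exact ⟨w, (Walk.isPath_def w).mpr hnd, halt, rfl⟩
  · obtain ⟨x, hdup⟩ := List.exists_duplicate_iff_not_nodup.mpr hnd
    have hx : x ∈ w.support := hdup.mem
    have hspec := w.take_spec hx
    have hcount : 2 ≤ w.support.count x := List.duplicate_iff_two_le_count.mp hdup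
    have hsupp : w.support = (w.takeUntil x hx).support ++ (w.dropUntil x hx).support.tail := by
      conv_lhs => rw [← hspec]
      rw [Walk.support_append]
    have hct : (w.takeUntil x hx).support.count x = 1 := w.count_support_takeUntil_eq_one hx
    have hxd : x ∈ (w.dropUntil x hx).support.tail := by
      have h1 : 1 ≤ (w.dropUntil x hx).support.tail.count x := by
        rw [hsupp, List.count_append] at hcount; omega
      exact List.count_pos_iff.mp h1
    obtain ⟨r, c, hcpos, hed, hlen2⟩ := splice (w.dropUntil x hx) hxd
    have hceven : Even c.length := (walk_parity hbip c).mpr rfl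
    -- the new walk
    have hwlen : w.length = (w.takeUntil x hx).length + c.length + r.length := by
      conv_lhs => rw [← hspec]
      rw [Walk.length_append]; omega
    have hwed : w.edges = (w.takeUntil x hx).edges ++ (c.edges ++ r.edges) := by
      conv_lhs => rw [← hspec]
      rw [Walk.edges_append, hed]
    rw [hwed, altEdges_append, altEdges_append] at halt
    obtain ⟨h1, h2, h3⟩ := halt
    have hflag : xf c.edges.length (xf (w.takeUntil x hx).edges.length false)
        = xf (w.takeUntil x hx).edges.length false := by
      rcases Nat.even_or_odd (w.takeUntil x hx).edges.length with hp | hp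
      · rw [xf_even hp, xf_even (by rw [Walk.length_edges]; exact hceven)]
      · rw [xf_even (by rw [Walk.length_edges]; exact hceven)]
    rw [hflag] at h3
    have halt' : altEdges S false ((w.takeUntil x hx).append r).edges := by
      rw [Walk.edges_append, altEdges_append]
      exact ⟨h1, h3⟩
    have hlt : ((w.takeUntil x hx).append r).length < n := by
      rw [Walk.length_append]; omega
    obtain ⟨p, hp1, hp2, hp3⟩ := ih _ hlt ((w.takeUntil x hx).append r) rfl halt'
    refine ⟨p, hp1, hp2, ?_⟩
    rw [hp3, Walk.length_append]
    have := Nat.even_iff.mp hceven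
    omega

end

section
variable {V : Type*} {G : SimpleGraph V}

open SimpleGraph.Subgraph in
lemma augment :
    ∀ (n : ℕ) (M : G.Subgraph), M.IsMatching → ∀ {a b : V} (P : G.Walk a b),
      P.length = n → P.IsPath → Odd P.length → a ∉ M.verts → b ∉ M.verts →
      altEdges M.edgeSet false P.edges →
      ∃ M' : G.Subgraph, M'.IsMatching ∧ M'.verts = M.verts ∪ {a, b} := by
  intro n
  induction n using Nat.strong_induction_on with
  | _ n ih =>
  intro M hM a b P hlen hpath hodd ha hb halt
  cases P with
  | nil => simp [Nat.odd_iff] at hodd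
  | @cons _ w1 _ h1 P2 =>
    cases P2 with
    | nil =>
      -- base case: single non-matching edge from a to b
      clear ih
      refine ⟨M ⊔ G.subgraphOfAdj h1, ?_, by
        rw [verts_sup, subgraphOfAdj_verts]⟩
      intro v hv
      rw [verts_sup, subgraphOfAdj_verts] at hv
      have hab : a ≠ b := h1.ne
      rcases hv with hvM | hv
      · obtain ⟨x, hx, hxu⟩ := hM hvM
        have hva : v ≠ a := fun h => ha (h ▸ hvM)
        have hvb : v ≠ b := fun h => hb (h ▸ hvM)
        refine ⟨x, Or.inl hx, fun y hy => ?_⟩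
        rcases hy with hy | hy
        · exact hxu y hy
        · rw [subgraphOfAdj_adj] at hy
          rw [Sym2.eq_iff] at hy
          rcases hy with ⟨h', -⟩ | ⟨-, h'⟩ <;> simp_all
      · rcases hv with rfl | rfl
        · refine ⟨b, Or.inr (by rw [subgraphOfAdj_adj]), fun y hy => ?_⟩
          rcases hy with hy | hy
          · exact absurd (M.edge_vert hy) ha
          · rw [subgraphOfAdj_adj] at hy
            exact (Sym2.congr_right.mp hy).symm
        · refine ⟨a, Or.inr (by rw [subgraphOfAdj_adj, Sym2.eq_swap]), fun y hy => ?_⟩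
          rcases hy with hy | hy
          · exact absurd (M.edge_vert hy) hb
          · rw [subgraphOfAdj_adj, Sym2.eq_swap] at hy
            exact (Sym2.congr_right.mp hy).symm
    | @cons _ w2 _ h2 P3 =>
      obtain ⟨he1, he2, h3⟩ : (s(a, w1) ∈ M.edgeSet ↔ False) ∧
          (s(w1, w2) ∈ M.edgeSet ↔ True) ∧ altEdges M.edgeSet false P3.edges := by
        obtain ⟨x1, x2, x3⟩ := halt
        exact ⟨by simpa using x1, by simpa using x2, by simpa [Walk.edges] using x3⟩
      have he2' : M.Adj w1 w2 := (Subgraph.mem_edgeSet).mp (he2.mpr trivial)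
      have hw1M : w1 ∈ M.verts := M.edge_vert he2'
      have hw2M : w2 ∈ M.verts := M.edge_vert he2'.symm
      have huw1 : ∀ y, M.Adj w1 y → y = w2 := by
        obtain ⟨x, -, hxu⟩ := hM hw1M
        exact fun y hy => (hxu y hy).trans (hxu w2 he2').symm
      have huw2 : ∀ y, M.Adj w2 y → y = w1 := by
        obtain ⟨x, -, hxu⟩ := hM hw2M
        exact fun y hy => (hxu y hy).trans (hxu w1 he2'.symm).symm
      -- support facts
      have hnd : (a :: (w1 :: P3.support)).Nodup := by
        have := (Walk.isPath_def _).mp hpath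
        simpa [Walk.support_cons] using this
      have haw1 : a ≠ w1 := by simp at hnd; tauto
      have haP3 : a ∉ P3.support := by simp at hnd; tauto
      have hw1P3 : w1 ∉ P3.support := by simp at hnd; tauto
      have hP3path : P3.IsPath := (hpath.of_cons).of_cons
      have hbP3 : b ∈ P3.support := Walk.end_mem_support P3
      have hw2P3 : w2 ∈ P3.support := Walk.start_mem_support P3
      have hba : b ≠ a := fun h => haP3 (h ▸ hbP3)
      have hbw1 : b ≠ w1 := fun h => hw1P3 (h ▸ hbP3)
      have hw2a : w2 ≠ a := fun h => haP3 (h ▸ hw2P3)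
      have hw2w1 : w2 ≠ w1 := h2.ne'
      -- the swapped matching
      set M1 : G.Subgraph := (M.deleteVerts {w2}) ⊔ G.subgraphOfAdj h1 with hM1def
      have hM1verts : M1.verts = (M.verts \ {w2}) ∪ {a, w1} := by
        rw [hM1def, verts_sup, deleteVerts_verts, subgraphOfAdj_verts]
      have hM1adj : ∀ x y, M1.Adj x y ↔
          ((M.Adj x y ∧ x ≠ w2 ∧ y ≠ w2) ∨ s(a, w1) = s(x, y)) := by
        intro x y
        rw [hM1def, Subgraph.sup_adj, deleteVerts_adj, subgraphOfAdj_adj]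
        constructor
        · rintro (⟨_, hx, _, hy, hadj⟩ | h)
          · exact Or.inl ⟨hadj, by simpa using hx, by simpa using hy⟩
          · exact Or.inr h
        · rintro (⟨hadj, hx, hy⟩ | h)
          · exact Or.inl ⟨M.edge_vert hadj, by simpa using hx,
              M.edge_vert hadj.symm, by simpa using hy, hadj⟩
          · exact Or.inr h
      -- edge set transfer on P3
      have hE : ∀ e ∈ P3.edges, (e ∈ M.edgeSet ↔ e ∈ M1.edgeSet) := by
        intro e he
        induction e using Sym2.ind with
        | _ x y =>
        rw [Subgraph.mem_edgeSet, Subgraph.mem_edgeSet, hM1adj]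
        have hxs : x ∈ P3.support := P3.fst_mem_support_of_mem_edges he
        have hys : y ∈ P3.support := P3.snd_mem_support_of_mem_edges he
        constructor
        · intro hadj
          left
          refine ⟨hadj, ?_, ?_⟩
          · rintro rfl
            exact hw1P3 ((huw2 y hadj) ▸ hys)
          · rintro rfl
            exact hw1P3 ((huw2 x hadj.symm) ▸ hxs)
        · rintro (⟨hadj, -, -⟩ | hsym)
          · exact hadj
          · rw [Sym2.eq_iff] at hsym
            rcases hsym with ⟨rfl, -⟩ | ⟨rfl, -⟩
            · exact absurd hxs haP3
            · exact absurd hys haP3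
      have halt1 : altEdges M1.edgeSet false P3.edges :=
        altEdges_congr P3.edges false hE h3
      -- M1 is a matching
      have hM1 : M1.IsMatching := by
        intro v hv
        rw [hM1verts] at hv
        by_cases hva : v = a
        · subst hva
          refine ⟨w1, (hM1adj _ _).mpr (Or.inr rfl), fun y hy => ?_⟩
          rcases (hM1adj _ _).mp hy with ⟨hadj, -, -⟩ | hsym
          · exact absurd (M.edge_vert hadj) ha
          · exact (Sym2.congr_right.mp hsym).symm
        by_cases hvw1 : v = w1
        · subst hvw1
          refine ⟨a, (hM1adj _ _).mpr (Or.inr (Sym2.eq_swap)), fun y hy => ?_⟩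
          rcases (hM1adj _ _).mp hy with ⟨hadj, -, hyw2⟩ | hsym
          · exact absurd (huw1 y hadj) hyw2
          · rw [Sym2.eq_iff] at hsym
            rcases hsym with ⟨h', -⟩ | ⟨h', -⟩
            · exact absurd h' haw1
            · exact h'.symm
        have hvM : v ∈ M.verts ∧ v ≠ w2 := by
          rcases hv with h | h
          · exact ⟨h.1, by simpa using h.2⟩
          · simp only [Set.mem_insert_iff, Set.mem_singleton_iff] at h
            rcases h with rfl | rfl
            · exact absurd rfl hva
            · exact absurd rfl hvw1
        obtain ⟨x, hx, hxu⟩ := hM hvM.1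
        have hxw2 : x ≠ w2 := by
          rintro rfl
          exact hvw1 (huw2 v hx.symm)
        refine ⟨x, (hM1adj _ _).mpr (Or.inl ⟨hx, hvM.2, hxw2⟩), fun y hy => ?_⟩
        rcases (hM1adj _ _).mp hy with ⟨hadj, -, -⟩ | hsym
        · exact hxu y hadj
        · rw [Sym2.eq_iff] at hsym
          rcases hsym with ⟨h', -⟩ | ⟨-, h'⟩
          · exact absurd h'.symm hva
          · exact absurd h'.symm hvw1
      -- recurse
      have hlen3 : P3.length < n := by
        simp only [Walk.length_cons] at hlen; omega
      have hodd3 : Odd P3.length := by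
        simp only [Walk.length_cons, Nat.odd_iff] at hodd ⊢; omega
      have hw2M1 : w2 ∉ M1.verts := by
        rw [hM1verts]; simp [hw2a, hw2w1]
      have hbM1 : b ∉ M1.verts := by
        rw [hM1verts]; simp [hb, hba, hbw1]
      obtain ⟨M', hM', hM'verts⟩ :=
        ih P3.length hlen3 M1 hM1 P3 rfl hP3path hodd3 hw2M1 hbM1 halt1
      refine ⟨M', hM', ?_⟩
      rw [hM'verts, hM1verts]
      ext x
      simp only [Set.mem_union, Set.mem_diff, Set.mem_singleton_iff, Set.mem_insert_iff]
      constructor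
      · rintro ((⟨h, -⟩ | h) | h)
        · exact Or.inl h
        · rcases h with rfl | rfl
          · exact Or.inr (Or.inl rfl)
          · exact Or.inl hw1M
        · rcases h with rfl | rfl
          · exact Or.inl hw2M
          · exact Or.inr (Or.inr rfl)
      · rintro (h | h)
        · by_cases hxw2 : x = w2
          · exact Or.inr (Or.inl hxw2)
          · exact Or.inl (Or.inl ⟨h, hxw2⟩)
        · rcases h with rfl | rfl
          · exact Or.inl (Or.inr (Or.inl rfl))
          · exact Or.inr (Or.inr rfl)

end


theorem dm_classes_pairwise_disjoint
    {V : Type*} [Fintype V] (G : SimpleGraph V)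
    (side : V → Bool) (hbip : ∀ u v, G.Adj u v → side u ≠ side v)
    (M : G.Subgraph) (hM : M.IsMatching)
    (hmax : ∀ M' : G.Subgraph, M'.IsMatching → M'.verts.ncard ≤ M.verts.ncard) :
    (∀ v, ¬ (EvenVtx G M v ∧ OddVtx G M v)) ∧
    (∀ v, ¬ (EvenVtx G M v ∧ UnreachableVtx G M v)) ∧
    (∀ v, ¬ (OddVtx G M v ∧ UnreachableVtx G M v)) := by
  have key : ∀ v, ¬ (EvenVtx G M v ∧ OddVtx G M v) := by
    rintro v ⟨⟨u0, hu0, p, hp, hpalt, hpeven⟩, ⟨u1, hu1, q, hq, hqalt, hqodd⟩⟩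
    have hs0 : side u0 = side v := (walk_parity hbip p).mp hpeven
    have hs1 : side u1 ≠ side v := by
      intro h
      exact (Nat.not_odd_iff_even.mpr ((walk_parity hbip q).mpr h)) hqodd
    have hne : u1 ≠ u0 := fun h => hs1 (h ▸ hs0)
    have hql : q.length % 2 = 1 := Nat.odd_iff.mp hqodd
    have hpl : p.length % 2 = 0 := Nat.even_iff.mp hpeven
    have hWalt : altEdges M.edgeSet false (q.append p.reverse).edges := by
      rw [Walk.edges_append, altEdges_append]
      refine ⟨hqalt, ?_⟩
      have hrev := altEdges_reverse p.edges false hpalt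
      rw [Walk.edges_reverse]
      have h1 : xf q.edges.length false = true := by
        simp [xf, hql]
      have h2 : xf (p.edges.length + 1) false = true := by
        have hc : (p.length + 1) % 2 = 1 := by omega
        simp [xf, hc]
      rw [h1]; rw [h2] at hrev; exact hrev
    have hWodd : (q.append p.reverse).length % 2 = 1 := by
      rw [Walk.length_append, Walk.length_reverse]; omega
    obtain ⟨P, hP, hPalt, hPpar⟩ :=
      extract_path hbip (q.append p.reverse).length (q.append p.reverse) rfl hWalt
    have hPodd : Odd P.length := Nat.odd_iff.mpr (by omega)
    obtain ⟨M', hM', hMv⟩ := augment P.length M hM P rfl hP hPodd hu1 hu0 hPalt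
    have hcard : M'.verts.ncard = M.verts.ncard + 2 := by
      rw [hMv]
      have h1 : M.verts ∪ {u1, u0} = insert u1 (insert u0 M.verts) := by
        ext x
        simp only [Set.mem_union, Set.mem_insert_iff, Set.mem_singleton_iff]
        tauto
      rw [h1, Set.ncard_insert_of_notMem (by simp [hne, hu1]),
        Set.ncard_insert_of_notMem hu0]
    have := hmax M' hM'
    omega
  refine ⟨key, ?_, ?_⟩
  · rintro v ⟨⟨u, hu, p, hp, halt, -⟩, hunr⟩
    exact hunr u p hu hp halt
  · rintro v ⟨⟨u, hu, p, hp, halt, -⟩, hunr⟩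
    exact hunr u p hu hp halt
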